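/- arXiv:2511.14873 — 2 statements merged into one kernel-verified Lean document; each statement's English description precedes it below -/
import Mathlib

section
/- For a Gateaux differentiable proper convex lower semicontinuous Ψ on X whose conjugate Ψ* is Gateaux differentiable on DΨ(int dom Ψ) ⊆ int dom Ψ*, the Bregman duality identity holds: D_Ψ(x,y) = D_{Ψ*}(DΨ(y), DΨ(x)) for all x, y ∈ int dom Ψ. -/
open Set Filter Topology

noncomputable section

/-- The Vainberg–Bregman functional `D_Ψ(a,b) = Ψ(a) - Ψ(b) - ⟨a - b, DΨ(b)⟩`. -/
def bregman {E : Type*} [NormedAddCommGroup E] [NormedSpace ℝ E]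
    (Ψ : E → EReal) (DΨ : E → E →L[ℝ] ℝ) (a b : E) : EReal :=
  Ψ a - Ψ b - ((DΨ b) (a - b) : EReal)

/-- Bregman duality identity: if the Mandelbrojt–Fenchel conjugate `Ψ*` is Gateaux
differentiable on `DΨ(int dom Ψ) ⊆ int dom Ψ*`, then
`D_Ψ(x,y) = D_{Ψ*}(DΨ(y), DΨ(x))` for all `x, y ∈ int dom Ψ`. -/
theorem bregman_duality
    {X : Type*} [NormedAddCommGroup X] [NormedSpace ℝ X] [CompleteSpace X]
    (Ψ : X → EReal) (DΨ : X → X →L[ℝ] ℝ)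
    (Ψs : (X →L[ℝ] ℝ) → EReal) (DΨs : (X →L[ℝ] ℝ) → (X →L[ℝ] ℝ) →L[ℝ] ℝ)
    (hproper_bot : ∀ w, Ψ w ≠ ⊥) (hproper_top : ∃ w, Ψ w ≠ ⊤)
    (hconvex : ∀ u v : X, ∀ a b : ℝ, 0 ≤ a → 0 ≤ b → a + b = 1 →
      Ψ (a • u + b • v) ≤ (a : EReal) * Ψ u + (b : EReal) * Ψ v)
    (hlsc : LowerSemicontinuous Ψ)
    (hgateaux : ∀ p ∈ interior {u : X | Ψ u ≠ ⊤}, ∀ v : X,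
      HasLineDerivAt ℝ (fun u => (Ψ u).toReal) ((DΨ p) v) p v)
    (hconj : ∀ w : X →L[ℝ] ℝ, Ψs w = ⨆ u : X, ((w u : EReal) - Ψ u))
    (hne : (interior {u : X | Ψ u ≠ ⊤}).Nonempty)
    (hsub : DΨ '' interior {u : X | Ψ u ≠ ⊤} ⊆ interior {w : X →L[ℝ] ℝ | Ψs w ≠ ⊤})
    (hgateaux_s : ∀ w ∈ DΨ '' interior {u : X | Ψ u ≠ ⊤}, ∀ p : X →L[ℝ] ℝ,
      HasLineDerivAt ℝ (fun q => (Ψs q).toReal) ((DΨs w) p) w p)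
    (x : X) (hx : x ∈ interior {u : X | Ψ u ≠ ⊤})
    (y : X) (hy : y ∈ interior {u : X | Ψ u ≠ ⊤}) :
    bregman Ψ DΨ x y = bregman Ψs DΨs (DΨ y) (DΨ x) := by
  have hfin : ∀ u ∈ interior {u : X | Ψ u ≠ ⊤}, Ψ u ≠ ⊤ := fun u hu => interior_subset hu
  -- subgradient inequality (real form)
  have key : ∀ u ∈ interior {u : X | Ψ u ≠ ⊤}, ∀ v, Ψ v ≠ ⊤ →
      (Ψ u).toReal + (DΨ u) (v - u) ≤ (Ψ v).toReal := by
    intro u hu v hv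
    have hg := hgateaux u hu (v - u)
    rw [HasLineDerivAt] at hg
    have hΨu : Ψ u = ((Ψ u).toReal : EReal) := (EReal.coe_toReal (hfin u hu) (hproper_bot u)).symm
    have hΨv : Ψ v = ((Ψ v).toReal : EReal) := (EReal.coe_toReal hv (hproper_bot v)).symm
    have hslope : ∀ t ∈ Ioc (0:ℝ) 1,
        ((Ψ (u + t • (v - u))).toReal - (Ψ u).toReal) / t ≤ (Ψ v).toReal - (Ψ u).toReal := by
      intro t ht
      have h1 : u + t • (v - u) = (1 - t) • u + t • v := by module
      have h2 := hconvex u v (1 - t) t (by linarith [ht.2]) (le_of_lt ht.1) (by ring)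
      rw [← h1, hΨu, hΨv] at h2
      have h3 : ((1 - t : ℝ) : EReal) * (((Ψ u).toReal : ℝ) : EReal)
          + (t : EReal) * (((Ψ v).toReal : ℝ) : EReal)
          = (((1 - t) * (Ψ u).toReal + t * (Ψ v).toReal : ℝ) : EReal) := by norm_cast
      rw [h3] at h2
      have hne_top : Ψ (u + t • (v - u)) ≠ ⊤ := (h2.trans_lt (EReal.coe_lt_top _)).ne
      have h4 : (Ψ (u + t • (v - u))).toReal ≤ (1 - t) * (Ψ u).toReal + t * (Ψ v).toReal := by
        have := EReal.toReal_le_toReal h2 (hproper_bot _) (EReal.coe_ne_top _)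
        rwa [EReal.toReal_coe] at this
      rw [div_le_iff₀ ht.1]
      nlinarith [h4]
    have hd : (DΨ u) (v - u) ≤ (Ψ v).toReal - (Ψ u).toReal := by
      have htend : Tendsto (slope (fun t : ℝ => (Ψ (u + t • (v - u))).toReal) 0)
          (𝓝[>] 0) (𝓝 ((DΨ u) (v - u))) :=
        (hasDerivAt_iff_tendsto_slope.mp hg).mono_left
          (nhdsWithin_mono _ (fun t ht => ne_of_gt ht))
      refine le_of_tendsto htend ?_
      filter_upwards [Ioc_mem_nhdsGT_of_mem (by norm_num : (0:ℝ) ∈ Ico (0:ℝ) 1)] with t ht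
      have := hslope t ht
      simpa [slope_def_field, sub_zero] using this
    linarith
  -- value of the conjugate at gradients
  have hΨsval : ∀ u ∈ interior {u : X | Ψ u ≠ ⊤},
      Ψs (DΨ u) = ((DΨ u u - (Ψ u).toReal : ℝ) : EReal) := by
    intro u hu
    have hΨu : Ψ u = ((Ψ u).toReal : EReal) := (EReal.coe_toReal (hfin u hu) (hproper_bot u)).symm
    rw [hconj]
    apply le_antisymm
    · apply iSup_le; intro v
      by_cases hv : Ψ v = ⊤
      · rw [hv]
        simp
      · have hΨv : Ψ v = ((Ψ v).toReal : EReal) := (EReal.coe_toReal hv (hproper_bot v)).symm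
        rw [hΨv]
        norm_cast
        have h1 := key u hu v hv
        have h2 : (DΨ u) (v - u) = DΨ u v - DΨ u u := map_sub _ _ _
        linarith
    · apply le_iSup_of_le u
      rw [hΨu]
      norm_cast
  -- gradient of the conjugate at DΨ x evaluates as x
  have hDΨs : ∀ p : X →L[ℝ] ℝ, DΨs (DΨ x) p = p x := by
    intro p
    have hmem : DΨ x ∈ DΨ '' interior {u : X | Ψ u ≠ ⊤} := ⟨x, hx, rfl⟩
    have hg := hgateaux_s (DΨ x) hmem p
    rw [HasLineDerivAt] at hg
    have hΨx : Ψ x = ((Ψ x).toReal : EReal) := (EReal.coe_toReal (hfin x hx) (hproper_bot x)).symm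
    have hlow : ∀ w : X →L[ℝ] ℝ, Ψs w ≠ ⊤ → w x - (Ψ x).toReal ≤ (Ψs w).toReal := by
      intro w hw
      have h1 : ((w x - (Ψ x).toReal : ℝ) : EReal) ≤ Ψs w := by
        rw [hconj]
        refine le_iSup_of_le x ?_
        rw [hΨx]
        norm_cast
      have h2 := EReal.toReal_le_toReal h1 (EReal.coe_ne_bot _) hw
      rwa [EReal.toReal_coe] at h2
    have hintmem : DΨ x ∈ interior {w : X →L[ℝ] ℝ | Ψs w ≠ ⊤} := hsub hmem
    have hev : ∀ᶠ t : ℝ in 𝓝 (0:ℝ), Ψs (DΨ x + t • p) ≠ ⊤ := by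
      have hcont : Continuous (fun t : ℝ => DΨ x + t • p) :=
        continuous_const.add (continuous_id.smul continuous_const)
      have htd : Tendsto (fun t : ℝ => DΨ x + t • p) (𝓝 0) (𝓝 (DΨ x)) := by
        have := hcont.tendsto 0
        simpa using this
      filter_upwards [htd.eventually_mem (isOpen_interior.mem_nhds hintmem)] with t ht
        using interior_subset ht
    have hval0 : (Ψs (DΨ x)).toReal = DΨ x x - (Ψ x).toReal := by
      rw [hΨsval x hx]; exact EReal.toReal_coe _
    have hmin : IsLocalMin (fun t : ℝ => (Ψs (DΨ x + t • p)).toReal - t * p x) 0 := by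
      filter_upwards [hev] with t ht
      have h1 := hlow _ ht
      have h2 : (DΨ x + t • p) x = DΨ x x + t * p x := by
        simp [ContinuousLinearMap.add_apply, ContinuousLinearMap.smul_apply, smul_eq_mul]
      simp only [zero_smul, add_zero, zero_mul, sub_zero]
      rw [hval0]
      rw [h2] at h1
      linarith
    have hF : HasDerivAt (fun t : ℝ => (Ψs (DΨ x + t • p)).toReal - t * p x)
        (DΨs (DΨ x) p - p x) 0 := hg.sub (hasDerivAt_mul_const (p x))
    have := hmin.hasDerivAt_eq_zero hF
    linarith
  have hΨx : Ψ x = ((Ψ x).toReal : EReal) := (EReal.coe_toReal (hfin x hx) (hproper_bot x)).symm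
  have hΨy : Ψ y = ((Ψ y).toReal : EReal) := (EReal.coe_toReal (hfin y hy) (hproper_bot y)).symm
  unfold bregman
  rw [hΨsval x hx, hΨsval y hy, hDΨs (DΨ y - DΨ x), hΨx, hΨy]
  have h1 : (DΨ y - DΨ x) x = DΨ y x - DΨ x x := rfl
  have h2 : (DΨ y) (x - y) = DΨ y x - DΨ y y := map_sub _ _ _
  rw [h1, h2]
  norm_cast
  simp only [EReal.toReal_coe]
  ring
end
end

section
/- Extension of Hölder homeomorphisms from spheres to balls: if α : S(Y) → S(X) between unit spheres of Banach spaces is t-Lipschitz–Hölder continuous with t ∈ (0,1], then the map sending x ∈ B(Y)\{0} to ‖x‖·α(x/‖x‖) and 0 to 0 is t-Lipschitz–Hölder continuous from the closed unit ball of Y to the closed unit ball of X. -/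
noncomputable section

private lemma d_le_two_rpow {d t : ℝ} (ht0 : 0 < t) (ht1 : t ≤ 1)
    (hd0 : 0 ≤ d) (hd2 : d ≤ 2) : d ≤ 2 * d ^ t := by
  rcases eq_or_lt_of_le hd0 with h | h
  · simp [← h, Real.zero_rpow (ne_of_gt ht0)]
  rcases le_total d 1 with h1 | h1
  · have : d ^ (1:ℝ) ≤ d ^ t := Real.rpow_le_rpow_of_exponent_ge h h1 ht1
    rw [Real.rpow_one] at this
    nlinarith [Real.rpow_nonneg hd0 t]
  · have : (1:ℝ) ≤ d ^ t := Real.one_le_rpow h1 (le_of_lt ht0)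
    nlinarith

/-- Extension of Hölder homeomorphisms from spheres to balls: if `α : S(Y) → S(X)` between
unit spheres of Banach spaces is `t`-Lipschitz–Hölder continuous with `t ∈ (0,1]`, then the
map `x ↦ ‖x‖ • α(x/‖x‖)` (sending `0` to `0`) is `t`-Lipschitz–Hölder continuous from the
closed unit ball of `Y` to the closed unit ball of `X`. -/
theorem hoelder_sphere_extension_to_ball
    {X Y : Type*} [NormedAddCommGroup X] [NormedSpace ℝ X] [CompleteSpace X]
    [NormedAddCommGroup Y] [NormedSpace ℝ Y] [CompleteSpace Y]
    (α : Y → X) (t : ℝ) (ht0 : 0 < t) (ht1 : t ≤ 1)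
    (hsphere : ∀ y : Y, ‖y‖ = 1 → ‖α y‖ = 1)
    (hα : ∃ c > 0, ∀ y₁ y₂ : Y, ‖y₁‖ = 1 → ‖y₂‖ = 1 →
      ‖α y₁ - α y₂‖ ≤ c * ‖y₁ - y₂‖ ^ t) :
    (∀ y : Y, ‖y‖ ≤ 1 → ‖‖y‖ • α (‖y‖⁻¹ • y)‖ ≤ 1) ∧
    (‖(0:Y)‖ • α (‖(0:Y)‖⁻¹ • (0:Y)) = (0:X)) ∧
    ∃ c > 0, ∀ y₁ y₂ : Y, ‖y₁‖ ≤ 1 → ‖y₂‖ ≤ 1 →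
      ‖‖y₁‖ • α (‖y₁‖⁻¹ • y₁) - ‖y₂‖ • α (‖y₂‖⁻¹ • y₂)‖ ≤ c * ‖y₁ - y₂‖ ^ t := by
  obtain ⟨c, hc, hC⟩ := hα
  have hunit : ∀ y : Y, y ≠ 0 → ‖(‖y‖⁻¹ • y)‖ = 1 := fun y hy => by
    rw [norm_smul, norm_inv, norm_norm, inv_mul_cancel₀ (norm_ne_zero_iff.mpr hy)]
  refine ⟨?_, by simp, ?_⟩
  · intro y hy
    rcases eq_or_ne y 0 with rfl | hy0
    · simp
    · rw [norm_smul, norm_norm, hsphere _ (hunit y hy0), mul_one]; exact hy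
  refine ⟨2*c + 2, by positivity, ?_⟩
  have key : ∀ y₁ y₂ : Y, ‖y₁‖ ≤ 1 → ‖y₂‖ ≤ 1 → ‖y₂‖ ≤ ‖y₁‖ →
      ‖‖y₁‖ • α (‖y₁‖⁻¹ • y₁) - ‖y₂‖ • α (‖y₂‖⁻¹ • y₂)‖ ≤ (2*c + 2) * ‖y₁ - y₂‖ ^ t := by
    intro y₁ y₂ h1 h2 hba
    rcases eq_or_ne y₁ 0 with rfl | hy1
    · have : y₂ = 0 := norm_le_zero_iff.mp (by simpa using hba)
      subst this
      simp [Real.zero_rpow (ne_of_gt ht0)]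
    rcases eq_or_ne y₂ 0 with rfl | hy2
    · rw [norm_zero, zero_smul, sub_zero, norm_smul, norm_norm,
        hsphere _ (hunit y₁ hy1), mul_one, sub_zero]
      have hd2 : ‖y₁‖ ≤ 2 := by linarith
      have := d_le_two_rpow ht0 ht1 (norm_nonneg y₁) hd2
      nlinarith [Real.rpow_nonneg (norm_nonneg y₁) t]
    set a := ‖y₁‖ with hadef
    set b := ‖y₂‖ with hbdef
    set d := ‖y₁ - y₂‖ with hddef
    set u₁ := a⁻¹ • y₁ with hu1
    set u₂ := b⁻¹ • y₂ with hu2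
    have ha : 0 < a := norm_pos_iff.mpr hy1
    have hb : 0 < b := norm_pos_iff.mpr hy2
    have hd0 : 0 ≤ d := norm_nonneg _
    have hd2 : d ≤ 2 := by
      calc d ≤ a + b := norm_sub_le _ _
        _ ≤ 2 := by linarith
    have hab : a - b ≤ d := by
      have := norm_sub_norm_le y₁ y₂; linarith
    -- bound on ‖u₁ - u₂‖
    have hu : ‖u₁ - u₂‖ ≤ 2 * d / a := by
      have heq : u₁ - u₂ = a⁻¹ • (y₁ - y₂) + (a⁻¹ - b⁻¹) • y₂ := by
        rw [hu1, hu2]; module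
      have hinv : |a⁻¹ - b⁻¹| * b ≤ d / a := by
        have h1' : a⁻¹ ≤ b⁻¹ := by gcongr
        rw [abs_of_nonpos (by linarith)]
        have heq2 : (b⁻¹ - a⁻¹) * b = (a - b) / a := by
          field_simp
        rw [neg_sub, heq2]
        gcongr
      calc ‖u₁ - u₂‖ = ‖a⁻¹ • (y₁ - y₂) + (a⁻¹ - b⁻¹) • y₂‖ := by rw [heq]
        _ ≤ ‖a⁻¹ • (y₁ - y₂)‖ + ‖(a⁻¹ - b⁻¹) • y₂‖ := norm_add_le _ _
        _ = a⁻¹ * d + |a⁻¹ - b⁻¹| * b := by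
            rw [norm_smul, norm_smul, Real.norm_eq_abs, Real.norm_eq_abs,
              abs_of_nonneg (by positivity)]
        _ ≤ d / a + d / a := add_le_add (le_of_eq (inv_mul_eq_div _ _)) hinv
        _ = 2 * d / a := by ring
    have hαb : ‖α u₁ - α u₂‖ ≤ c * ‖u₁ - u₂‖ ^ t :=
      hC u₁ u₂ (hunit y₁ hy1) (hunit y₂ hy2)
    have h2dt : (2 * d / a) ^ t ≤ 2 * d ^ t / a := by
      rw [Real.div_rpow (by positivity) ha.le, Real.mul_rpow (by norm_num) hd0]
      have ha1 : a ≤ a ^ t := by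
        calc a = a ^ (1:ℝ) := (Real.rpow_one a).symm
          _ ≤ a ^ t := Real.rpow_le_rpow_of_exponent_ge ha h1 ht1
      have h2t : (2:ℝ) ^ t ≤ 2 := by
        calc (2:ℝ) ^ t ≤ 2 ^ (1:ℝ) := Real.rpow_le_rpow_of_exponent_le one_le_two ht1
          _ = 2 := Real.rpow_one 2
      gcongr
    have hA : a * (c * ‖u₁ - u₂‖ ^ t) ≤ 2 * c * d ^ t := by
      have h1' : ‖u₁ - u₂‖ ^ t ≤ (2 * d / a) ^ t :=
        Real.rpow_le_rpow (norm_nonneg _) hu ht0.le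
      calc a * (c * ‖u₁ - u₂‖ ^ t) ≤ a * (c * (2 * d ^ t / a)) := by
            gcongr
            exact h1'.trans h2dt
        _ = 2 * c * d ^ t := by field_simp
    have hB : d ≤ 2 * d ^ t := d_le_two_rpow ht0 ht1 hd0 hd2
    have heq2 : a • α u₁ - b • α u₂ = a • (α u₁ - α u₂) + (a - b) • α u₂ := by
      module
    calc ‖a • α u₁ - b • α u₂‖
        ≤ ‖a • (α u₁ - α u₂)‖ + ‖(a - b) • α u₂‖ := by rw [heq2]; exact norm_add_le _ _
      _ = a * ‖α u₁ - α u₂‖ + (a - b) * 1 := by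
          rw [norm_smul, norm_smul, Real.norm_eq_abs, Real.norm_eq_abs,
            abs_of_nonneg ha.le, abs_of_nonneg (by linarith), hsphere _ (hunit y₂ hy2)]
      _ ≤ a * (c * ‖u₁ - u₂‖ ^ t) + d := by
          gcongr
          linarith
      _ ≤ 2 * c * d ^ t + 2 * d ^ t := add_le_add hA hB
      _ = (2*c + 2) * d ^ t := by ring
  intro y₁ y₂ h1 h2
  rcases le_total ‖y₂‖ ‖y₁‖ with h | h
  · exact key y₁ y₂ h1 h2 h
  · rw [norm_sub_rev, norm_sub_rev y₁ y₂]
    exact key y₂ y₁ h2 h1 h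
end
end
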